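/- The set 𝒟 = {σ_h : h ∈ H} ∪ {μ_g : g ∈ G∖H} is closed under transposition and its elements sum to the all-ones matrix: explicitly, σ_hᵀ = σ_h for every h ∈ H, μ_{xy}ᵀ = μ_{xy}, μ_{x³y}ᵀ = μ_{x³y}, μ_xᵀ = μ_{x³}, and σ_1 + σ_{x²} + σ_y + σ_{x²y} + μ_x + μ_{x³} + μ_{xy} + μ_{x³y} = J_{4n}, the 4n×4n all-ones matrix. -/
import Mathlib


open Matrix Kronecker

/-- The block matrix `E` with zero diagonal blocks and all-ones off-diagonal blocks. -/
def Etil (n : ℕ) : Matrix (Fin 1 ⊕ Fin (n - 1)) (Fin 1 ⊕ Fin (n - 1)) ℚ :=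
  Matrix.fromBlocks 0 (Matrix.of fun _ _ => 1) (Matrix.of fun _ _ => 1) 0

/-- The block matrix `Ã` with `A` as lower-right block and zeros elsewhere. -/
def Atil {n : ℕ} (A : Matrix (Fin (n - 1)) (Fin (n - 1)) ℚ) :
    Matrix (Fin 1 ⊕ Fin (n - 1)) (Fin 1 ⊕ Fin (n - 1)) ℚ :=
  Matrix.fromBlocks 0 0 0 A

/-- The permutation matrix of the 4-cycle (1,2,3,4). -/
def xD : Matrix (Fin 4) (Fin 4) ℚ := !![0,1,0,0; 0,0,1,0; 0,0,0,1; 1,0,0,0]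

/-- The permutation matrix of (1,2)(3,4). -/
def yD : Matrix (Fin 4) (Fin 4) ℚ := !![0,1,0,0; 1,0,0,0; 0,0,0,1; 0,0,1,0]

/-- `σ_h := I_n ⊗ h`. -/
def sig (n : ℕ) (h : Matrix (Fin 4) (Fin 4) ℚ) :
    Matrix ((Fin 1 ⊕ Fin (n - 1)) × Fin 4) ((Fin 1 ⊕ Fin (n - 1)) × Fin 4) ℚ :=
  (1 : Matrix (Fin 1 ⊕ Fin (n - 1)) (Fin 1 ⊕ Fin (n - 1)) ℚ) ⊗ₖ h

/-- `μ_g := E ⊗ g + Ã₁ ⊗ (g·y) + Ã₂ ⊗ (g·x²·y)`. -/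
def mu {n : ℕ} (A₁ : Matrix (Fin (n - 1)) (Fin (n - 1)) ℚ) (g : Matrix (Fin 4) (Fin 4) ℚ) :
    Matrix ((Fin 1 ⊕ Fin (n - 1)) × Fin 4) ((Fin 1 ⊕ Fin (n - 1)) × Fin 4) ℚ :=
  Etil n ⊗ₖ g + Atil A₁ ⊗ₖ (g * yD) + Atil A₁ᵀ ⊗ₖ (g * xD ^ 2 * yD)

section helpers
variable {α : Type*}

lemma mf4 [NonUnitalNonAssocSemiring α]
    (a₁₁ a₁₂ a₁₃ a₁₄ a₂₁ a₂₂ a₂₃ a₂₄ a₃₁ a₃₂ a₃₃ a₃₄ a₄₁ a₄₂ a₄₃ a₄₄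
     b₁₁ b₁₂ b₁₃ b₁₄ b₂₁ b₂₂ b₂₃ b₂₄ b₃₁ b₃₂ b₃₃ b₃₄ b₄₁ b₄₂ b₄₃ b₄₄ : α) :
    !![a₁₁,a₁₂,a₁₃,a₁₄; a₂₁,a₂₂,a₂₃,a₂₄; a₃₁,a₃₂,a₃₃,a₃₄; a₄₁,a₄₂,a₄₃,a₄₄] *
    !![b₁₁,b₁₂,b₁₃,b₁₄; b₂₁,b₂₂,b₂₃,b₂₄; b₃₁,b₃₂,b₃₃,b₃₄; b₄₁,b₄₂,b₄₃,b₄₄] =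
    !![a₁₁*b₁₁+a₁₂*b₂₁+a₁₃*b₃₁+a₁₄*b₄₁, a₁₁*b₁₂+a₁₂*b₂₂+a₁₃*b₃₂+a₁₄*b₄₂,
       a₁₁*b₁₃+a₁₂*b₂₃+a₁₃*b₃₃+a₁₄*b₄₃, a₁₁*b₁₄+a₁₂*b₂₄+a₁₃*b₃₄+a₁₄*b₄₄;
       a₂₁*b₁₁+a₂₂*b₂₁+a₂₃*b₃₁+a₂₄*b₄₁, a₂₁*b₁₂+a₂₂*b₂₂+a₂₃*b₃₂+a₂₄*b₄₂,
       a₂₁*b₁₃+a₂₂*b₂₃+a₂₃*b₃₃+a₂₄*b₄₃, a₂₁*b₁₄+a₂₂*b₂₄+a₂₃*b₃₄+a₂₄*b₄₄;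
       a₃₁*b₁₁+a₃₂*b₂₁+a₃₃*b₃₁+a₃₄*b₄₁, a₃₁*b₁₂+a₃₂*b₂₂+a₃₃*b₃₂+a₃₄*b₄₂,
       a₃₁*b₁₃+a₃₂*b₂₃+a₃₃*b₃₃+a₃₄*b₄₃, a₃₁*b₁₄+a₃₂*b₂₄+a₃₃*b₃₄+a₃₄*b₄₄;
       a₄₁*b₁₁+a₄₂*b₂₁+a₄₃*b₃₁+a₄₄*b₄₁, a₄₁*b₁₂+a₄₂*b₂₂+a₄₃*b₃₂+a₄₄*b₄₂,
       a₄₁*b₁₃+a₄₂*b₂₃+a₄₃*b₃₃+a₄₄*b₄₃, a₄₁*b₁₄+a₄₂*b₂₄+a₄₃*b₃₄+a₄₄*b₄₄] := by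
  ext i j
  fin_cases i <;> fin_cases j <;>
    simp [Matrix.mul_apply, Fin.sum_univ_four, Matrix.vecHead, Matrix.vecTail]

lemma tf4 (a₁₁ a₁₂ a₁₃ a₁₄ a₂₁ a₂₂ a₂₃ a₂₄ a₃₁ a₃₂ a₃₃ a₃₄ a₄₁ a₄₂ a₄₃ a₄₄ : α) :
    (!![a₁₁,a₁₂,a₁₃,a₁₄; a₂₁,a₂₂,a₂₃,a₂₄; a₃₁,a₃₂,a₃₃,a₃₄; a₄₁,a₄₂,a₄₃,a₄₄])ᵀ =
    !![a₁₁,a₂₁,a₃₁,a₄₁; a₁₂,a₂₂,a₃₂,a₄₂; a₁₃,a₂₃,a₃₃,a₄₃; a₁₄,a₂₄,a₃₄,a₄₄] := by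
  ext i j
  fin_cases i <;> fin_cases j <;>
    simp [Matrix.vecHead, Matrix.vecTail]

lemma af4 [AddCommMonoid α]
    (a₁₁ a₁₂ a₁₃ a₁₄ a₂₁ a₂₂ a₂₃ a₂₄ a₃₁ a₃₂ a₃₃ a₃₄ a₄₁ a₄₂ a₄₃ a₄₄
     b₁₁ b₁₂ b₁₃ b₁₄ b₂₁ b₂₂ b₂₃ b₂₄ b₃₁ b₃₂ b₃₃ b₃₄ b₄₁ b₄₂ b₄₃ b₄₄ : α) :
    !![a₁₁,a₁₂,a₁₃,a₁₄; a₂₁,a₂₂,a₂₃,a₂₄; a₃₁,a₃₂,a₃₃,a₃₄; a₄₁,a₄₂,a₄₃,a₄₄] +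
    !![b₁₁,b₁₂,b₁₃,b₁₄; b₂₁,b₂₂,b₂₃,b₂₄; b₃₁,b₃₂,b₃₃,b₃₄; b₄₁,b₄₂,b₄₃,b₄₄] =
    !![a₁₁+b₁₁,a₁₂+b₁₂,a₁₃+b₁₃,a₁₄+b₁₄; a₂₁+b₂₁,a₂₂+b₂₂,a₂₃+b₂₃,a₂₄+b₂₄;
       a₃₁+b₃₁,a₃₂+b₃₂,a₃₃+b₃₃,a₃₄+b₃₄; a₄₁+b₄₁,a₄₂+b₄₂,a₄₃+b₄₃,a₄₄+b₄₄] := by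
  ext i j
  fin_cases i <;> fin_cases j <;>
    simp [Matrix.vecHead, Matrix.vecTail]

end helpers

lemma hxD : xD = !![0,1,0,0; 0,0,1,0; 0,0,0,1; 1,0,0,0] := rfl
lemma hyD : yD = !![0,1,0,0; 1,0,0,0; 0,0,0,1; 0,0,1,0] := rfl

lemma h1f : (1 : Matrix (Fin 4) (Fin 4) ℚ) = !![1,0,0,0;0,1,0,0;0,0,1,0;0,0,0,1] := by
  ext i j
  fin_cases i <;> fin_cases j <;>
    simp [Matrix.one_apply, Matrix.vecHead, Matrix.vecTail, Fin.ext_iff] <;> decide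

lemma hx2 : xD^2 = !![0,0,1,0;0,0,0,1;1,0,0,0;0,1,0,0] := by
  rw [pow_two, hxD, mf4]; norm_num

lemma hx3 : xD^3 = !![0,0,0,1;1,0,0,0;0,1,0,0;0,0,1,0] := by
  rw [pow_succ, hx2, hxD, mf4]; norm_num

lemma hxy : xD*yD = !![1,0,0,0;0,0,0,1;0,0,1,0;0,1,0,0] := by
  rw [hxD, hyD, mf4]; norm_num

lemma hx2y : xD^2*yD = !![0,0,0,1;0,0,1,0;0,1,0,0;1,0,0,0] := by
  rw [hx2, hyD, mf4]; norm_num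

lemma hx3y : xD^3*yD = !![0,0,1,0;0,1,0,0;1,0,0,0;0,0,0,1] := by
  rw [hx3, hyD, mf4]; norm_num

lemma hxx2y : xD*xD^2*yD = !![0,0,1,0;0,1,0,0;1,0,0,0;0,0,0,1] := by
  rw [hx2, hxD, hyD, mf4]; norm_num [mf4]

lemma hx3x2y : xD^3*xD^2*yD = !![1,0,0,0;0,0,0,1;0,0,1,0;0,1,0,0] := by
  rw [hx3, hx2, hyD, mf4]; norm_num [mf4]

lemma hxyy : xD*yD*yD = !![0,1,0,0; 0,0,1,0; 0,0,0,1; 1,0,0,0] := by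
  rw [hxy, hyD, mf4]; norm_num

lemma hxyx2y : xD*yD*xD^2*yD = !![0,0,0,1;1,0,0,0;0,1,0,0;0,0,1,0] := by
  rw [hx2, hxy, hyD, mf4]; norm_num [mf4]

lemma hx3yy : xD^3*yD*yD = !![0,0,0,1;1,0,0,0;0,1,0,0;0,0,1,0] := by
  rw [hx3y, hyD, mf4]; norm_num

lemma hx3yx2y : xD^3*yD*xD^2*yD = !![0,1,0,0; 0,0,1,0; 0,0,0,1; 1,0,0,0] := by
  rw [hx2, hx3y, hyD, mf4]; norm_num [mf4]

-- sum facts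
lemma hS : (1 : Matrix (Fin 4) (Fin 4) ℚ) + xD^2 + yD + xD^2*yD
    = Matrix.of fun _ _ => 1 := by
  rw [hx2y, h1f, hx2, hyD, af4, af4, af4]
  norm_num
  ext i j
  fin_cases i <;> fin_cases j <;> simp [Matrix.vecHead, Matrix.vecTail]

lemma hT : xD + xD^3 + xD*yD + xD^3*yD = Matrix.of fun _ _ => 1 := by
  rw [hx3y, hxy, hx3, hxD, af4, af4, af4]
  norm_num
  ext i j
  fin_cases i <;> fin_cases j <;> simp [Matrix.vecHead, Matrix.vecTail]

lemma hTy : xD*yD + xD^3*yD + xD*yD*yD + xD^3*yD*yD = Matrix.of fun _ _ => 1 := by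
  rw [hx3yy, hxyy, hx3y, hxy, af4, af4, af4]
  norm_num
  ext i j
  fin_cases i <;> fin_cases j <;> simp [Matrix.vecHead, Matrix.vecTail]

lemma hTx : xD*xD^2*yD + xD^3*xD^2*yD + xD*yD*xD^2*yD + xD^3*yD*xD^2*yD
    = Matrix.of fun _ _ => 1 := by
  rw [hx3yx2y, hxyx2y, hx3x2y, hxx2y, af4, af4, af4]
  norm_num
  ext i j
  fin_cases i <;> fin_cases j <;> simp [Matrix.vecHead, Matrix.vecTail]

-- structural lemmas
lemma Etil_t (n : ℕ) : (Etil n)ᵀ = Etil n := by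
  ext i j; rcases i with i|i <;> rcases j with j|j <;> rfl

lemma Atil_t {n : ℕ} (A : Matrix (Fin (n - 1)) (Fin (n - 1)) ℚ) :
    (Atil A)ᵀ = Atil Aᵀ := by
  ext i j; rcases i with i|i <;> rcases j with j|j <;> rfl

lemma kron_t {m n p q : Type*} (A : Matrix m n ℚ) (B : Matrix p q ℚ) :
    (A ⊗ₖ B)ᵀ = Aᵀ ⊗ₖ Bᵀ := (Matrix.kroneckerMap_transpose _ _ _).symm

lemma mu_t {n : ℕ} (A₁ : Matrix (Fin (n - 1)) (Fin (n - 1)) ℚ)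
    (g g' : Matrix (Fin 4) (Fin 4) ℚ)
    (h1 : gᵀ = g') (h2 : (g*yD)ᵀ = g'*xD^2*yD) (h3 : (g*xD^2*yD)ᵀ = g'*yD) :
    (mu A₁ g)ᵀ = mu A₁ g' := by
  unfold mu
  rw [transpose_add, transpose_add, kron_t, kron_t, kron_t, Etil_t, Atil_t, Atil_t,
    transpose_transpose, h1, h2, h3]
  abel

lemma sig_t (n : ℕ) (h : Matrix (Fin 4) (Fin 4) ℚ) (hh : hᵀ = h) :
    (sig n h)ᵀ = sig n h := by
  unfold sig
  rw [kron_t, transpose_one, hh]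

theorem stmt_6 (n : ℕ) (hn : 4 ≤ n) (a b : ℚ)
    (ha : a = (n : ℚ) - 1) (hb : b = ((n : ℚ) - 2) / 2)
    (A₁ : Matrix (Fin (n - 1)) (Fin (n - 1)) ℚ)
    (h01 : ∀ i j, A₁ i j = 0 ∨ A₁ i j = 1)
    (hdiag : ∀ i, A₁ i i = 0)
    (hns : A₁ ≠ A₁ᵀ)
    (hsum : A₁ + A₁ᵀ = (Matrix.of fun _ _ => (1 : ℚ)) - 1)
    (hrow : ∀ i, ∑ j, A₁ i j = b)
    (h11 : A₁ * A₁ = ((b - 1) / 2) • A₁ + ((b + 1) / 2) • A₁ᵀ)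
    (h22 : A₁ᵀ * A₁ᵀ = ((b + 1) / 2) • A₁ + ((b - 1) / 2) • A₁ᵀ)
    (h12 : A₁ * A₁ᵀ = b • (1 : Matrix (Fin (n - 1)) (Fin (n - 1)) ℚ)
      + ((b - 1) / 2) • A₁ + ((b - 1) / 2) • A₁ᵀ)
    (h21 : A₁ᵀ * A₁ = b • (1 : Matrix (Fin (n - 1)) (Fin (n - 1)) ℚ)
      + ((b - 1) / 2) • A₁ + ((b - 1) / 2) • A₁ᵀ) :
    (∀ h ∈ ({1, xD ^ 2, yD, xD ^ 2 * yD} : Set (Matrix (Fin 4) (Fin 4) ℚ)), (sig n h)ᵀ = sig n h) ∧ (mu A₁ (xD * yD))ᵀ = mu A₁ (xD * yD) ∧ (mu A₁ (xD ^ 3 * yD))ᵀ = mu A₁ (xD ^ 3 * yD) ∧ (mu A₁ xD)ᵀ = mu A₁ (xD ^ 3) ∧ sig n 1 + sig n (xD ^ 2) + sig n yD + sig n (xD ^ 2 * yD) + mu A₁ xD + mu A₁ (xD ^ 3) + mu A₁ (xD * yD) + mu A₁ (xD ^ 3 * yD) = Matrix.of fun _ _ => 1 := by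
  refine ⟨?_, ?_, ?_, ?_, ?_⟩
  · intro h hh
    simp only [Set.mem_insert_iff, Set.mem_singleton_iff] at hh
    rcases hh with rfl | rfl | rfl | rfl
    · exact sig_t n _ transpose_one
    · exact sig_t n _ (by rw [hx2, tf4])
    · exact sig_t n _ (by rw [hyD, tf4])
    · exact sig_t n _ (by rw [hx2y, tf4])
  · exact mu_t A₁ _ _ (by rw [hxy, tf4]) (by rw [hxyy, hxyx2y, tf4])
      (by rw [hxyx2y, hxyy, tf4])
  · exact mu_t A₁ _ _ (by rw [hx3y, tf4]) (by rw [hx3yy, hx3yx2y, tf4])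
      (by rw [hx3yx2y, hx3yy, tf4])
  · exact mu_t A₁ _ _ (by rw [hx3, hxD, tf4]) (by rw [hxy, hx3x2y, tf4])
      (by rw [hxx2y, hx3y, tf4])
  · have expand : sig n 1 + sig n (xD ^ 2) + sig n yD + sig n (xD ^ 2 * yD)
        + mu A₁ xD + mu A₁ (xD ^ 3) + mu A₁ (xD * yD) + mu A₁ (xD ^ 3 * yD)
        = (1 : Matrix (Fin 1 ⊕ Fin (n - 1)) (Fin 1 ⊕ Fin (n - 1)) ℚ)
            ⊗ₖ ((1 : Matrix (Fin 4) (Fin 4) ℚ) + xD^2 + yD + xD^2*yD)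
          + Etil n ⊗ₖ (xD + xD^3 + xD*yD + xD^3*yD)
          + Atil A₁ ⊗ₖ (xD*yD + xD^3*yD + xD*yD*yD + xD^3*yD*yD)
          + Atil A₁ᵀ ⊗ₖ (xD*xD^2*yD + xD^3*xD^2*yD + xD*yD*xD^2*yD + xD^3*yD*xD^2*yD) := by
      simp only [sig, mu, Matrix.kronecker_add]
      abel
    rw [expand, hS, hT, hTy, hTx, ← Matrix.add_kronecker, ← Matrix.add_kronecker,
      ← Matrix.add_kronecker]
    have hBlocks : (1 : Matrix (Fin 1 ⊕ Fin (n - 1)) (Fin 1 ⊕ Fin (n - 1)) ℚ)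
        + Etil n + Atil A₁ + Atil A₁ᵀ = Matrix.of fun _ _ => 1 := by
      ext i j
      rcases i with i|i <;> rcases j with j|j <;>
        simp [Etil, Atil, Matrix.one_apply, Sum.inl.injEq, Sum.inr.injEq]
      · exact Subsingleton.elim i j ▸ by simp
      · have hs := congrFun (congrFun hsum i) j
        simp [Matrix.one_apply] at hs
        by_cases h : i = j
        · subst h; simp at hs ⊢; linarith
        · simp [h] at hs ⊢; linarith
    rw [hBlocks]
    ext ⟨i, k⟩ ⟨j, l⟩
    simp
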